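/- In the wreath product G ≀ L, two elements (η, b) and (η', b') are conjugate if and only if there exists d ∈ L with b' = d^{-1} b d such that for every right coset ⟨b⟩t of the cyclic subgroup ⟨b⟩ in L, the coset products agree: when b has infinite order, Π_{k=−∞}^{∞} η(b^{-k} t) = Π_{k=−∞}^{∞} η'^d(b^{-k} t) (finite products since supports are finite); when b has finite order K, the products Π_{k=0}^{K−1} η(b^{-k} t) and Π_{k=0}^{K−1} η'^d(b^{-k} t) are conjugate in G. -/

import Mathlib

/-- Wreath product multiplication `(η,m)(θ,n) = (η · θ^m, mn)` with `θ^m(l) = θ(m⁻¹l)`. -/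
def wrMul {G L : Type*} [Group G] [Group L] :
    ((L → G) × L) → ((L → G) × L) → ((L → G) × L) :=
  fun p q => (p.1 * fun l => q.1 (p.2⁻¹ * l), p.2 * q.2)

/-- The truncated ordered product `Π_{k=-N}^{N} η(b^{-k} t)`, taken in increasing
order of `k`. For finitely supported `η` this stabilizes to `π_{⟨b⟩t}(η)` as `N → ∞`. -/
def zProd {G L : Type*} [Group G] [Group L] (η : L → G) (b t : L) (N : ℕ) : G :=
  (((List.range (2 * N + 1)).map fun i => η (b ^ ((N : ℤ) - (i : ℤ)) * t)).prod)

/-- The ordered product `Π_{k=0}^{K-1} η(b^{-k} t)`. -/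
def finProd {G L : Type*} [Group G] [Group L] (η : L → G) (b t : L) (K : ℕ) : G :=
  (((List.range K).map fun k => η (b ^ (-(k : ℤ)) * t)).prod)

namespace Stmt7Aux
variable {G L : Type*} [Group G] [Group L]




omit [Group G] in
lemma coe_flat (l : List ℕ) (g : ℤ → G) :
    List.map g (l : List ℤ) = List.map (fun i : ℕ => g (i:ℤ)) l := by
  induction l with
  | nil => rfl
  | cons a l ih => exact congrArg (g (a:ℤ) :: ·) ih

/-- partial product `Π_{j=-M}^{k-1} f(b^{-j} t)` -/
def PP (f : L → G) (b t : L) (M : ℕ) (k : ℤ) : G :=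
  (((List.range (k + M).toNat).map fun i : ℕ => f (b ^ ((M : ℤ) - (i : ℤ)) * t)).prod)

def fP (f : L → G) (b t : L) (K : ℕ) : G :=
  ((List.range K).map (fun k : ℕ => f (b ^ (-(k:ℤ)) * t))).prod

def zP (f : L → G) (b t : L) (N : ℕ) : G :=
  ((List.range (2*N+1)).map (fun i : ℕ => f (b ^ ((N:ℤ) - (i:ℤ)) * t))).prod

lemma zProd_eq (f : L → G) (b t : L) (N : ℕ) : zProd f b t N = zP f b t N := by
  unfold zProd zP; congr 1; exact coe_flat _ _

lemma finProd_eq (f : L → G) (b t : L) (K : ℕ) : finProd f b t K = fP f b t K := by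
  unfold finProd fP; congr 1; exact coe_flat _ _

lemma PP_empty (f : L → G) (b t : L) (M : ℕ) {k : ℤ} (hk : k + M ≤ 0) :
    PP f b t M k = 1 := by
  unfold PP
  rw [Int.toNat_of_nonpos hk]
  simp

lemma PP_succ (f : L → G) (b t : L) (M : ℕ) {k : ℤ} (hk : 0 ≤ k + M) :
    PP f b t M (k + 1) = PP f b t M k * f (b ^ (-k) * t) := by
  unfold PP
  have h1 : (k + 1 + M).toNat = (k + M).toNat + 1 := by omega
  rw [h1, List.range_succ, List.map_append, List.prod_append]
  simp only [List.map_cons, List.map_nil, List.prod_cons, List.prod_nil, mul_one]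
  have h2 : ((M : ℤ) - ((k + M).toNat : ℤ)) = -k := by omega
  rw [h2]

lemma PP_eq_zP (f : L → G) (b t : L) (N : ℕ) :
    PP f b t N ((N : ℤ) + 1) = zP f b t N := by
  unfold PP zP
  have : ((N : ℤ) + 1 + N).toNat = 2 * N + 1 := by omega
  rw [this]

lemma PP_stable (f : L → G) (b t : L) (M : ℕ)
    (hf : ∀ j : ℤ, (M : ℤ) < |j| → f (b ^ j * t) = 1) {k : ℤ} (hk : (M : ℤ) + 1 ≤ k) :
    PP f b t M k = PP f b t M ((M : ℤ) + 1) := by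
  refine Int.le_induction (motive := fun k _ => PP f b t M k = PP f b t M ((M:ℤ)+1)) rfl (fun n hn ih => ?_) k hk
  show PP f b t M (n + 1) = _
  rw [show PP f b t M (n+1) = PP f b t M n * f (b ^ (-n) * t) from PP_succ f b t M (by omega),
    ih, hf (-n) (by rw [abs_neg, abs_of_nonneg (by omega : (0:ℤ) ≤ n)]; omega), mul_one]

lemma fP_succ (f : L → G) (b t : L) (m : ℕ) :
    fP f b t (m + 1) = fP f b t m * f (b ^ (-(m : ℤ)) * t) := by
  unfold fP
  rw [List.range_succ, List.map_append, List.prod_append]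
  simp

lemma zP_succ (f : L → G) (b t : L) (N : ℕ) :
    zP f b t (N + 1)
      = f (b ^ ((N : ℤ) + 1) * t) * zP f b t N * f (b ^ (-(N : ℤ) - 1) * t) := by
  unfold zP
  have h : 2 * (N + 1) + 1 = (2 * N + 1 + 1) + 1 := by ring
  rw [h, List.range_succ, List.map_append, List.prod_append, List.range_succ_eq_map,
    List.map_cons, List.prod_cons, List.map_map]
  have hl : ((N + 1 : ℕ) : ℤ) - ((2 * N + 1 + 1 : ℕ) : ℤ) = -(N : ℤ) - 1 := by push_cast; ring
  have hmap : ((fun i : ℕ => f (b ^ (((N + 1 : ℕ) : ℤ) - (i : ℤ)) * t)) ∘ Nat.succ)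
      = fun i : ℕ => f (b ^ ((N : ℤ) - (i : ℤ)) * t) := by
    funext i
    simp only [Function.comp_apply]
    congr 2
    push_cast
    ring
  rw [hmap]
  simp only [List.map_cons, List.map_nil, List.prod_cons, List.prod_nil, mul_one]
  rw [hl]
  have h0 : ((N + 1 : ℕ) : ℤ) - ((0:ℕ) : ℤ) = (N : ℤ) + 1 := by push_cast; ring
  rw [h0]


def bS (b : L) : Setoid L where
  r l m := ∃ n : ℤ, m = b ^ n * l
  iseqv := {
    refl := fun l => ⟨0, by simp⟩
    symm := fun {l m} h => by
      obtain ⟨n, rfl⟩ := h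
      exact ⟨-n, by rw [← mul_assoc, ← zpow_add]; simp⟩
    trans := fun {l m k} h1 h2 => by
      obtain ⟨n, rfl⟩ := h1; obtain ⟨n', rfl⟩ := h2
      exact ⟨n' + n, by rw [← mul_assoc, ← zpow_add]⟩ }

noncomputable def rep (b : L) (l : L) : L := (Quotient.mk (bS b) l).out

lemma rep_spec (b l : L) : ∃ n : ℤ, l = b ^ n * rep b l :=
  Quotient.exact (Quotient.out_eq (Quotient.mk (bS b) l))

lemma rep_binv (b l : L) : rep b (b⁻¹ * l) = rep b l := by
  unfold rep
  congr 1
  exact Quotient.sound ⟨1, by rw [zpow_one]; exact (mul_inv_cancel_left b l).symm⟩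

lemma rep_eq_of_mk_eq {b s l : L} (h : Quotient.mk (bS b) s = Quotient.mk (bS b) l) :
    rep b s = rep b l := by unfold rep; rw [h]

lemma zpow_mul_injective {b : L} (h0 : orderOf b = 0) (t : L) :
    Function.Injective fun n : ℤ => b ^ n * t := by
  intro m n h
  exact injective_zpow_iff_not_isOfFinOrder.2 (orderOf_eq_zero_iff.1 h0) (mul_right_cancel h)

lemma exists_coord_fin {b : L} (hK : orderOf b ≠ 0) (l : L) :
    ∃ k : ℕ, k < orderOf b ∧ l = b ^ (-(k : ℤ)) * rep b l := by
  obtain ⟨n, hn⟩ := rep_spec b l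
  have hKpos : 0 < (orderOf b : ℤ) := by
    exact_mod_cast Nat.pos_of_ne_zero hK
  have h2 : 0 ≤ (-n) % (orderOf b : ℤ) := Int.emod_nonneg _ (by omega)
  have h1 : (-n) % (orderOf b : ℤ) < orderOf b := Int.emod_lt_of_pos _ hKpos
  refine ⟨((-n) % (orderOf b : ℤ)).toNat, by omega, ?_⟩
  have hdvd : (orderOf b : ℤ) ∣ (-((-n) % (orderOf b : ℤ)) - n) :=
    ⟨(-n) / (orderOf b : ℤ), by rw [Int.emod_def]; ring⟩
  have hone : b ^ (-((-n) % (orderOf b : ℤ)) - n) = 1 := orderOf_dvd_iff_zpow_eq_one.mp hdvd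
  have hpow : b ^ (-((((-n) % (orderOf b : ℤ)).toNat : ℕ) : ℤ)) = b ^ n := by
    rw [Int.toNat_of_nonneg h2,
      show -((-n) % (orderOf b : ℤ)) = (-((-n) % (orderOf b : ℤ)) - n) + n by ring,
      zpow_add, hone, one_mul]
  rw [hpow, ← hn]

lemma coord_fin_unique {b t : L} {k k' : ℕ} (hk : k < orderOf b) (hk' : k' < orderOf b)
    (h : b ^ (-(k : ℤ)) * t = b ^ (-(k' : ℤ)) * t) : k = k' := by
  have h2 : b ^ (-(k:ℤ)) = b ^ (-(k':ℤ)) := mul_right_cancel h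
  rw [zpow_neg, zpow_neg] at h2
  have h3 := inv_injective h2
  rw [zpow_natCast, zpow_natCast] at h3
  exact pow_injOn_Iio_orderOf (Set.mem_Iio.2 hk) (Set.mem_Iio.2 hk') h3


lemma mk_binv (b l : L) : Quotient.mk (bS b) (b⁻¹ * l) = Quotient.mk (bS b) l :=
  Quotient.sound ⟨1, by rw [zpow_one]; exact (mul_inv_cancel_left b l).symm⟩

lemma rep_binv' (b l : L) : rep b (b⁻¹ * l) = rep b l := by
  unfold rep; rw [mk_binv]

/-- The coset of `l` meets the support of `η` or `θ`. -/
def Rel (b : L) (η θ : L → G) (l : L) : Prop :=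
  ∃ s : L, Quotient.mk (bS b) s = Quotient.mk (bS b) l ∧ (η s ≠ 1 ∨ θ s ≠ 1)

lemma Rel_binv (b : L) (η θ : L → G) (l : L) : Rel b η θ (b⁻¹ * l) ↔ Rel b η θ l := by
  unfold Rel; rw [mk_binv]

lemma not_Rel (b : L) {η θ : L → G} {l : L} (h : ¬ Rel b η θ l) : η l = 1 ∧ θ l = 1 := by
  unfold Rel at h
  push_neg at h
  exact h l rfl

open Classical in
noncomputable def zetaF (η θ : L → G) (b : L) (g : L → G) (kf : L → ℕ) : L → G := fun l =>
  if Rel b η θ l then (fP θ b (rep b l) (kf l))⁻¹ * g (rep b l) * fP η b (rep b l) (kf l) else 1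

lemma zetaF_pos {η θ : L → G} {b : L} (g : L → G) (kf : L → ℕ) {l : L} (h : Rel b η θ l) :
    zetaF η θ b g kf l
      = (fP θ b (rep b l) (kf l))⁻¹ * g (rep b l) * fP η b (rep b l) (kf l) := by
  simp only [zetaF]
  rw [if_pos h]

lemma zetaF_neg {η θ : L → G} {b : L} (g : L → G) (kf : L → ℕ) {l : L} (h : ¬ Rel b η θ l) :
    zetaF η θ b g kf l = 1 := by
  simp only [zetaF]
  rw [if_neg h]

lemma binv_mul (b t : L) (e : ℤ) : b⁻¹ * (b ^ e * t) = b ^ (e - 1) * t := by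
  rw [← mul_assoc, ← zpow_neg_one, ← zpow_add, show -1 + e = e - 1 by ring]

lemma core_back_fin (η θ : L → G) (b : L)
    (hη : (Function.mulSupport η).Finite) (hθ : (Function.mulSupport θ).Finite)
    (hK : orderOf b ≠ 0)
    (hyp : ∀ t : L, ∃ g : G, g * finProd η b t (orderOf b) = finProd θ b t (orderOf b) * g) :
    ∃ ζ : L → G, (Function.mulSupport ζ).Finite ∧ ∀ l, ζ l * η l = θ l * ζ (b⁻¹ * l) := by
  classical
  have hyp' : ∀ t : L, ∃ g : G, g * fP η b t (orderOf b) = fP θ b t (orderOf b) * g := by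
    intro t; obtain ⟨g, hg⟩ := hyp t; exact ⟨g, by rwa [← finProd_eq, ← finProd_eq]⟩
  choose g hg using hyp'
  choose kf hkf1 hkf2 using exists_coord_fin (b := b) hK
  refine ⟨zetaF η θ b g kf, ?_, ?_⟩
  · have hsub : Function.mulSupport (zetaF η θ b g kf) ⊆
        ⋃ s ∈ (Function.mulSupport η ∪ Function.mulSupport θ),
          (fun k : ℕ => b ^ (-(k:ℤ)) * rep b s) '' (Set.Iio (orderOf b)) := by
      intro l hl
      have hrll : Rel b η θ l := by
        by_contra h
        exact hl (by simp [zetaF, h])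
      obtain ⟨s, hs1, hs2⟩ := hrll
      refine Set.mem_biUnion (show s ∈ _ from ?_) ?_
      · rcases hs2 with h | h
        · exact Or.inl h
        · exact Or.inr h
      · refine ⟨kf l, hkf1 l, ?_⟩
        show b ^ (-(kf l : ℤ)) * rep b s = l
        rw [rep_eq_of_mk_eq hs1]
        exact (hkf2 l).symm
    exact ((hη.union hθ).biUnion
      (fun s _ => (Set.finite_Iio (orderOf b)).image _)).subset hsub
  · intro l
    by_cases hrll : Rel b η θ l
    · have hrl2 : Rel b η θ (b⁻¹ * l) := (Rel_binv b η θ l).2 hrll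
      have hrept : rep b (b⁻¹ * l) = rep b l := rep_binv' b l
      have hbl : b⁻¹ * l = b ^ (-(kf l : ℤ) - 1) * rep b l := by
        conv_lhs => rw [hkf2 l]
        rw [binv_mul]
      have hbl' : b⁻¹ * l = b ^ (-(kf (b⁻¹ * l) : ℤ)) * rep b l := by
        conv_lhs => rw [hkf2 (b⁻¹ * l)]
        rw [hrept]
      rw [zetaF_pos g kf hrll, zetaF_pos g kf hrl2, hrept]
      by_cases hlast : kf l + 1 < orderOf b
      · have hk' : kf (b⁻¹ * l) = kf l + 1 := by
          refine coord_fin_unique (t := rep b l) (hkf1 _) hlast ?_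
          rw [← hbl', hbl]
          congr 1
          push_cast
          ring
        rw [hk', fP_succ, fP_succ]
        have : b ^ (-(kf l : ℤ)) * rep b l = l := (hkf2 l).symm
        rw [this]
        group
      · have hkK : kf l + 1 = orderOf b := by have := hkf1 l; omega
        have hk' : kf (b⁻¹ * l) = 0 := by
          refine coord_fin_unique (t := rep b l) (hkf1 _) (Nat.pos_of_ne_zero hK) ?_
          rw [← hbl', hbl]
          have : b ^ (-(kf l : ℤ) - 1) = b ^ (-((0:ℕ) : ℤ)) := by
            have hdvd : (orderOf b : ℤ) ∣ (-(kf l : ℤ) - 1 - (-((0:ℕ):ℤ))) :=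
              ⟨-1, by push_cast [← hkK]; ring⟩
            have hone := orderOf_dvd_iff_zpow_eq_one.mp hdvd
            rw [show -(kf l : ℤ) - 1 = (-(kf l : ℤ) - 1 - (-((0:ℕ):ℤ))) + (-((0:ℕ):ℤ)) by ring,
              zpow_add, hone, one_mul]
          rw [this]
        rw [hk']
        have hfull : ∀ f : L → G, fP f b (rep b l) (orderOf b)
            = fP f b (rep b l) (kf l) * f l := by
          intro f
          rw [← hkK, fP_succ, ← hkf2 l]
        have hgl := hg (rep b l)
        rw [hfull η, hfull θ] at hgl
        have h0 : fP η b (rep b l) 0 = 1 := by simp [fP]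
        have h0' : fP θ b (rep b l) 0 = 1 := by simp [fP]
        rw [h0, h0', inv_one, one_mul, mul_one]
        calc (fP θ b (rep b l) (kf l))⁻¹ * g (rep b l) * fP η b (rep b l) (kf l) * η l
            = (fP θ b (rep b l) (kf l))⁻¹
              * (g (rep b l) * (fP η b (rep b l) (kf l) * η l)) := by group
          _ = (fP θ b (rep b l) (kf l))⁻¹
              * (fP θ b (rep b l) (kf l) * θ l * g (rep b l)) := by rw [hgl]
          _ = θ l * g (rep b l) := by group
    · have hrl2 : ¬ Rel b η θ (b⁻¹ * l) := fun h => hrll ((Rel_binv b η θ l).1 h)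
      obtain ⟨he, hth⟩ := not_Rel b hrll
      rw [zetaF_neg g kf hrll, zetaF_neg g kf hrl2, he, hth]

open Classical in
noncomputable def zetaI (η θ : L → G) (b : L) (Mf : L → ℕ) (nf : L → ℤ) : L → G := fun l =>
  if Rel b η θ l then
    (PP θ b (rep b l) (Mf (rep b l)) (-(nf l)))⁻¹ * PP η b (rep b l) (Mf (rep b l)) (-(nf l))
  else 1

lemma zetaI_pos {η θ : L → G} {b : L} (Mf : L → ℕ) (nf : L → ℤ) {l : L}
    (h : Rel b η θ l) : zetaI η θ b Mf nf l
      = (PP θ b (rep b l) (Mf (rep b l)) (-(nf l)))⁻¹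
        * PP η b (rep b l) (Mf (rep b l)) (-(nf l)) := by
  simp only [zetaI]
  rw [if_pos h]

lemma zetaI_neg {η θ : L → G} {b : L} (Mf : L → ℕ) (nf : L → ℤ) {l : L}
    (h : ¬ Rel b η θ l) : zetaI η θ b Mf nf l = 1 := by
  simp only [zetaI]
  rw [if_neg h]

lemma core_back_inf (η θ : L → G) (b : L)
    (hη : (Function.mulSupport η).Finite) (hθ : (Function.mulSupport θ).Finite)
    (h0 : orderOf b = 0)
    (hyp : ∀ t : L, ∃ N₀ : ℕ, ∀ N ≥ N₀, zProd η b t N = zProd θ b t N) :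
    ∃ ζ : L → G, (Function.mulSupport ζ).Finite ∧ ∀ l, ζ l * η l = θ l * ζ (b⁻¹ * l) := by
  classical
  have hyp' : ∀ t : L, ∃ N₀ : ℕ, ∀ N ≥ N₀, zP η b t N = zP θ b t N := by
    intro t; obtain ⟨N₀, h⟩ := hyp t
    exact ⟨N₀, fun N hN => by rw [← zProd_eq, ← zProd_eq]; exact h N hN⟩
  have exM : ∀ t : L, ∃ M : ℕ,
      (∀ j : ℤ, (M:ℤ) < |j| → η (b ^ j * t) = 1 ∧ θ (b ^ j * t) = 1) ∧
      (∀ N, M ≤ N → zP η b t N = zP θ b t N) := by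
    intro t
    obtain ⟨N₀, hN₀⟩ := hyp' t
    have hfin : ((fun n : ℤ => b ^ n * t) ⁻¹'
        (Function.mulSupport η ∪ Function.mulSupport θ)).Finite :=
      Set.Finite.preimage (zpow_mul_injective h0 t).injOn (hη.union hθ)
    obtain ⟨M1, hM1⟩ := (hfin.image Int.natAbs).bddAbove
    refine ⟨max M1 N₀, ?_, fun N hN => hN₀ N (le_trans (le_max_right _ _) hN)⟩
    intro j hj
    have hnot : j ∉ (fun n : ℤ => b ^ n * t) ⁻¹'
        (Function.mulSupport η ∪ Function.mulSupport θ) := by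
      intro hmem
      have hle : j.natAbs ≤ M1 := hM1 (Set.mem_image_of_mem _ hmem)
      have : |j| = (j.natAbs : ℤ) := Int.abs_eq_natAbs j
      omega
    simp only [Set.mem_preimage, Set.mem_union, Function.mem_mulSupport, not_or,
      not_not] at hnot
    exact hnot
  choose Mf hMf1 hMf2 using exM
  choose nf hnf using fun l => rep_spec b l
  refine ⟨zetaI η θ b Mf nf, ?_, ?_⟩
  · have hsub : Function.mulSupport (zetaI η θ b Mf nf) ⊆
        ⋃ s ∈ (Function.mulSupport η ∪ Function.mulSupport θ),
          (fun j : ℤ => b ^ j * rep b s) ''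
            (Set.Icc (-(Mf (rep b s) : ℤ)) ((Mf (rep b s) : ℤ))) := by
      intro l hl
      have hrll : Rel b η θ l := by
        by_contra h
        exact hl (zetaI_neg Mf nf h)
      obtain ⟨s, hs1, hs2⟩ := hrll
      have hreps : rep b s = rep b l := rep_eq_of_mk_eq hs1
      have hlow : 0 < -(nf l) + (Mf (rep b l) : ℤ) := by
        by_contra hc
        push_neg at hc
        apply hl
        rw [zetaI_pos Mf nf ⟨s, hs1, hs2⟩, PP_empty _ _ _ _ hc, PP_empty _ _ _ _ hc]
        simp
      have hhigh : -(nf l) ≤ (Mf (rep b l) : ℤ) := by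
        by_contra hc
        push_neg at hc
        apply hl
        rw [zetaI_pos Mf nf ⟨s, hs1, hs2⟩,
          PP_stable θ b (rep b l) (Mf (rep b l)) (fun j hj => (hMf1 (rep b l) j hj).2)
            (by omega),
          PP_stable η b (rep b l) (Mf (rep b l)) (fun j hj => (hMf1 (rep b l) j hj).1)
            (by omega),
          PP_eq_zP, PP_eq_zP, hMf2 (rep b l) (Mf (rep b l)) le_rfl]
        simp
      refine Set.mem_biUnion (show s ∈ _ from ?_) ?_
      · rcases hs2 with h | h
        · exact Or.inl h
        · exact Or.inr h
      · refine ⟨nf l, ?_, ?_⟩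
        · rw [hreps]
          constructor <;> omega
        · show b ^ (nf l) * rep b s = l
          rw [hreps]
          exact (hnf l).symm
    exact ((hη.union hθ).biUnion
      (fun s _ => (Set.finite_Icc _ _).image _)).subset hsub
  · intro l
    by_cases hrll : Rel b η θ l
    · have hrl2 : Rel b η θ (b⁻¹ * l) := (Rel_binv b η θ l).2 hrll
      have hrept : rep b (b⁻¹ * l) = rep b l := rep_binv' b l
      have hnf2 : nf (b⁻¹ * l) = nf l - 1 := by
        apply zpow_mul_injective h0 (rep b l)
        show b ^ (nf (b⁻¹ * l)) * rep b l = b ^ (nf l - 1) * rep b l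
        rw [← hrept]
        conv_lhs => rw [← hnf (b⁻¹ * l)]
        rw [hrept, ← binv_mul b (rep b l) (nf l), ← hnf l]
      rw [zetaI_pos Mf nf hrll, zetaI_pos Mf nf hrl2, hrept, hnf2,
        show -(nf l - 1) = -(nf l) + 1 by ring]
      by_cases hc : 0 ≤ -(nf l) + (Mf (rep b l) : ℤ)
      · rw [PP_succ η b (rep b l) (Mf (rep b l)) hc, PP_succ θ b (rep b l) (Mf (rep b l)) hc,
          neg_neg, ← hnf l]
        group
      · push_neg at hc
        have habs : (Mf (rep b l) : ℤ) < |nf l| := by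
          rw [abs_of_nonneg (by omega : (0:ℤ) ≤ nf l)]
          omega
        have he : η l = 1 := by
          conv_lhs => rw [hnf l]
          exact (hMf1 (rep b l) (nf l) habs).1
        have hth : θ l = 1 := by
          conv_lhs => rw [hnf l]
          exact (hMf1 (rep b l) (nf l) habs).2
        rw [he, hth, PP_empty _ _ _ _ (by omega), PP_empty _ _ _ _ (by omega),
          PP_empty _ _ _ _ (by omega), PP_empty _ _ _ _ (by omega)]
        simp
    · have hrl2 : ¬ Rel b η θ (b⁻¹ * l) := fun h => hrll ((Rel_binv b η θ l).1 h)
      obtain ⟨he, hth⟩ := not_Rel b hrll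
      rw [zetaI_neg Mf nf hrll, zetaI_neg Mf nf hrl2, he, hth]

lemma core_fwd (η θ : L → G) (b : L) (ζ : L → G) (hζ : (Function.mulSupport ζ).Finite)
    (hcomm : ∀ l, ζ l * η l = θ l * ζ (b⁻¹ * l)) (t : L) :
    (orderOf b = 0 → ∃ N₀ : ℕ, ∀ N ≥ N₀, zProd η b t N = zProd θ b t N) ∧
    (orderOf b ≠ 0 → ∃ g : G, g * finProd η b t (orderOf b)
        = finProd θ b t (orderOf b) * g) := by
  have key : ∀ e : ℤ,
      η (b ^ e * t) = (ζ (b ^ e * t))⁻¹ * θ (b ^ e * t) * ζ (b ^ (e - 1) * t) := by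
    intro e
    have h := hcomm (b ^ e * t)
    rw [binv_mul] at h
    rw [mul_assoc, ← h]
    group
  have tel : ∀ N : ℕ, zP η b t N
      = (ζ (b ^ (N : ℤ) * t))⁻¹ * zP θ b t N * ζ (b ^ (-(N : ℤ) - 1) * t) := by
    intro N
    induction N with
    | zero =>
      have h := hcomm t
      have h1 : zP η b t 0 = η t := by simp [zP, List.range_succ]
      have h2 : zP θ b t 0 = θ t := by simp [zP, List.range_succ]
      have e1 : (b : L) ^ ((0:ℕ):ℤ) * t = t := by norm_num
      have e2 : (b : L) ^ (-((0:ℕ):ℤ) - 1) * t = b⁻¹ * t := by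
        norm_num
      rw [h1, h2, e1, e2, mul_assoc, ← h]
      group
    | succ N ih =>
      rw [zP_succ, zP_succ, ih, key ((N:ℤ)+1), key (-(N:ℤ)-1)]
      have e1 : ((N:ℤ) + 1 - 1) = (N:ℤ) := by ring
      have e2 : (-(N:ℤ) - 1 - 1) = -(((N+1:ℕ)):ℤ) - 1 := by push_cast; ring
      have e3 : (((N+1:ℕ)):ℤ) = (N:ℤ) + 1 := by push_cast; ring
      rw [e1, e2, e3]
      group
  constructor
  · intro h0
    obtain ⟨M1, hM1⟩ := ((Set.Finite.preimage (zpow_mul_injective h0 t).injOn hζ).image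
      Int.natAbs).bddAbove
    have hz : ∀ n : ℤ, (M1 : ℤ) < |n| → ζ (b ^ n * t) = 1 := by
      intro n hn
      by_contra h
      have hmem : n ∈ (fun n : ℤ => b ^ n * t) ⁻¹' Function.mulSupport ζ := h
      have hle : n.natAbs ≤ M1 := hM1 (Set.mem_image_of_mem _ hmem)
      have : |n| = (n.natAbs : ℤ) := Int.abs_eq_natAbs n
      omega
    refine ⟨M1 + 1, fun N hN => ?_⟩
    rw [zProd_eq, zProd_eq, tel N,
      hz (N:ℤ) (by rw [abs_of_nonneg (by positivity)]; exact_mod_cast by omega),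
      hz (-(N:ℤ) - 1) (by rw [abs_of_nonpos (by omega), neg_sub]; push_cast; omega)]
    simp
  · intro hK
    have telF : ∀ m : ℕ, ζ t * fP η b t m = fP θ b t m * ζ (b ^ (-(m:ℤ)) * t) := by
      intro m
      induction m with
      | zero => simp [fP]
      | succ m ih =>
        rw [fP_succ, fP_succ, ← mul_assoc, ih, mul_assoc, hcomm (b ^ (-(m:ℤ)) * t),
          binv_mul, show -((m:ℕ):ℤ) - 1 = -(((m+1:ℕ)):ℤ) by push_cast; ring, ← mul_assoc]
    refine ⟨ζ t, ?_⟩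
    have h1 : b ^ (-(orderOf b : ℤ)) = 1 := by
      rw [zpow_neg, zpow_natCast, pow_orderOf_eq_one, inv_one]
    have h := telF (orderOf b)
    rw [h1, one_mul] at h
    rw [finProd_eq, finProd_eq]
    exact h

lemma core (η θ : L → G) (b : L)
    (hη : (Function.mulSupport η).Finite) (hθ : (Function.mulSupport θ).Finite) :
    (∃ ζ : L → G, (Function.mulSupport ζ).Finite ∧ ∀ l, ζ l * η l = θ l * ζ (b⁻¹ * l)) ↔
    (∀ t : L, (orderOf b = 0 → ∃ N₀ : ℕ, ∀ N ≥ N₀, zProd η b t N = zProd θ b t N) ∧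
      (orderOf b ≠ 0 → ∃ g : G, g * finProd η b t (orderOf b)
        = finProd θ b t (orderOf b) * g)) := by
  constructor
  · rintro ⟨ζ, h1, h2⟩ t
    exact core_fwd η θ b ζ h1 h2 t
  · intro h
    by_cases h0 : orderOf b = 0
    · exact core_back_inf η θ b hη hθ h0 (fun t => (h t).1 h0)
    · exact core_back_fin η θ b hη hθ h0 (fun t => (h t).2 h0)

end Stmt7Aux

/-- two elements `(η,b)`, `(η',b')` of the restricted wreath product
`G ≀ L` are conjugate iff there is `d ∈ L` with `b' = d⁻¹bd` such that for every right
coset `⟨b⟩t`: if `b` has infinite order the (eventually constant) bi-infinite coset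
products of `η` and `η'^d` agree, and if `b` has finite order `K` the coset products
`Π_{k=0}^{K-1}` of `η` and `η'^d` are conjugate in `G`. -/
theorem stmt7 {G L : Type*} [Group G] [Group L] (η η' : L → G) (b b' : L)
    (hη : (Function.mulSupport η).Finite) (hη' : (Function.mulSupport η').Finite) :
    (∃ x : (L → G) × L, (Function.mulSupport x.1).Finite ∧
        wrMul x (η, b) = wrMul (η', b') x) ↔
    ∃ d : L, b' = d⁻¹ * b * d ∧ ∀ t : L,
      (orderOf b = 0 →
        ∃ N₀ : ℕ, ∀ N ≥ N₀, zProd η b t N = zProd (fun l => η' (d⁻¹ * l)) b t N) ∧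
      (orderOf b ≠ 0 →
        ∃ g : G, g * finProd η b t (orderOf b)
          = finProd (fun l => η' (d⁻¹ * l)) b t (orderOf b) * g) := by
  constructor
  · rintro ⟨⟨ξ, e⟩, hfin, heq⟩
    simp only [wrMul, Prod.mk.injEq] at heq
    obtain ⟨h1, h2⟩ := heq
    have hb' : b' = e * b * e⁻¹ := by rw [h2]; group
    refine ⟨e⁻¹, by rw [inv_inv, hb'], ?_⟩
    have hcomm : ∀ l, (fun l => ξ (e * l)) l * η l
        = (fun l => η' (e * l)) l * (fun l => ξ (e * l)) (b⁻¹ * l) := by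
      intro l
      have h := congrFun h1 (e * l)
      simp only [Pi.mul_apply] at h
      have e1 : e⁻¹ * (e * l) = l := by group
      have e2 : b'⁻¹ * (e * l) = e * (b⁻¹ * l) := by rw [hb']; group
      rw [e1, e2] at h
      exact h
    have hfin2 : (Function.mulSupport fun l => ξ (e * l)).Finite :=
      Set.Finite.subset (Set.Finite.preimage (mul_right_injective e).injOn hfin)
        (fun x hx => hx)
    intro t
    have hres := Stmt7Aux.core_fwd η (fun l => η' (e * l)) b _ hfin2 hcomm t
    simpa only [inv_inv] using hres
  · rintro ⟨d, hb', hcond⟩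
    have hθfin : (Function.mulSupport fun l => η' (d⁻¹ * l)).Finite :=
      Set.Finite.subset (Set.Finite.preimage (mul_right_injective d⁻¹).injOn hη')
        (fun x hx => hx)
    obtain ⟨ζ, hζfin, hζcomm⟩ :=
      (Stmt7Aux.core η (fun l => η' (d⁻¹ * l)) b hη hθfin).2 hcond
    refine ⟨(fun l => ζ (d * l), d⁻¹), ?_, ?_⟩
    · exact Set.Finite.subset (Set.Finite.preimage (mul_right_injective d).injOn hζfin)
        (fun x hx => hx)
    · simp only [wrMul, Prod.mk.injEq]
      constructor
      · funext l
        simp only [Pi.mul_apply]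
        have h := hζcomm (d * l)
        have e1 : d⁻¹ * (d * l) = l := by group
        have e2 : b⁻¹ * (d * l) = d * (b'⁻¹ * l) := by rw [hb']; group
        rw [e1, e2] at h
        have e3 : d⁻¹⁻¹ * l = d * l := by rw [inv_inv]
        rw [e3]
        exact h
      · rw [hb']; group
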